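/- The polar dual P° of the polytope P = conv{±(1,0,0), ±(0,1,0), ±(0,0,1), ±(1,1,0), ±(1,0,1)} is a lattice polytope (P is reflexive), has barycentre at the origin, and has normalised volume 28 (i.e., Euclidean volume 28/6). -/

import Mathlib

open MeasureTheory

/-- The ten vertices `±(1,0,0), ±(0,1,0), ±(0,0,1), ±(1,1,0), ±(1,0,1)`. -/
def V7 : Set (Fin 3 → ℝ) :=
  {![1,0,0], ![0,1,0], ![0,0,1], ![1,1,0], ![1,0,1],
   -![1,0,0], -![0,1,0], -![0,0,1], -![1,1,0], -![1,0,1]}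

/-- The polytope `P`. -/
def P7 : Set (Fin 3 → ℝ) := convexHull ℝ V7

/-- The polar dual `P° = {m : ⟨m,n⟩ ≥ -1 for all n ∈ P}`. -/
def Pdual : Set (Fin 3 → ℝ) := {m | ∀ n ∈ P7, -1 ≤ ∑ i, m i * n i}

lemma mem_Pdual_iff (m : Fin 3 → ℝ) :
    m ∈ Pdual ↔ (-1 ≤ m 0 ∧ m 0 ≤ 1 ∧ -1 ≤ m 1 ∧ m 1 ≤ 1 ∧ -1 ≤ m 2 ∧ m 2 ≤ 1 ∧
      -1 ≤ m 0 + m 1 ∧ m 0 + m 1 ≤ 1 ∧ -1 ≤ m 0 + m 2 ∧ m 0 + m 2 ≤ 1) := by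
  constructor
  · intro h
    have hv : ∀ v ∈ V7, -1 ≤ ∑ i, m i * v i := fun v hv => h v (subset_convexHull ℝ V7 hv)
    have h1 := hv ![1,0,0] (by simp [V7])
    have h2 := hv ![0,1,0] (by simp [V7])
    have h3 := hv ![0,0,1] (by simp [V7])
    have h4 := hv ![1,1,0] (by simp [V7])
    have h5 := hv ![1,0,1] (by simp [V7])
    have h6 := hv (-![1,0,0]) (by simp [V7])
    have h7 := hv (-![0,1,0]) (by simp [V7])
    have h8 := hv (-![0,0,1]) (by simp [V7])
    have h9 := hv (-![1,1,0]) (by simp [V7])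
    have h10 := hv (-![1,0,1]) (by simp [V7])
    simp [Fin.sum_univ_three] at h1 h2 h3 h4 h5 h6 h7 h8 h9 h10
    refine ⟨by linarith, by linarith, by linarith, by linarith, by linarith,
      by linarith, by linarith, by linarith, by linarith, by linarith⟩
  · intro h n hn
    have key : P7 ⊆ {n : Fin 3 → ℝ | -1 ≤ ∑ i, m i * n i} := by
      refine convexHull_min ?_ ?_
      · intro v hv
        simp only [V7, Set.mem_insert_iff, Set.mem_singleton_iff] at hv
        rcases hv with h'|h'|h'|h'|h'|h'|h'|h'|h'|h' <;> subst h' <;>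
          · simp only [Set.mem_setOf_eq, Fin.sum_univ_three]
            simp
            obtain ⟨a1,a2,a3,a4,a5,a6,a7,a8,a9,a10⟩ := h
            linarith
      · intro p hp q hq a b ha hb hab
        simp only [Set.mem_setOf_eq, Fin.sum_univ_three] at hp hq ⊢
        simp only [Pi.add_apply, Pi.smul_apply, smul_eq_mul]
        nlinarith [hp, hq]
    exact key hn

/-- The twelve vertices of the dual polytope, as real vectors. -/
def S' : Set (Fin 3 → ℝ) :=
  {![0,1,1], ![0,1,-1], ![0,-1,1], ![0,-1,-1],
   ![1,0,0], ![1,0,-1], ![1,-1,0], ![1,-1,-1],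
   ![-1,0,0], ![-1,0,1], ![-1,1,0], ![-1,1,1]}

lemma prism_pos (m : Fin 3 → ℝ) (hx0 : 0 ≤ m 0) (hx1 : m 0 ≤ 1)
    (hy0 : -1 ≤ m 1) (hy1 : m 1 ≤ 1 - m 0) (hz0 : -1 ≤ m 2) (hz1 : m 2 ≤ 1 - m 0) :
    m ∈ convexHull ℝ S' := by
  set x := m 0
  have hden : (0:ℝ) < 2 - x := by linarith
  set s := (m 1 + 1) / (2 - x) with hs
  set t := (m 2 + 1) / (2 - x) with ht
  have hs0 : 0 ≤ s := div_nonneg (by linarith) (by linarith)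
  have hs1 : s ≤ 1 := by rw [hs, div_le_one hden]; linarith
  have ht0 : 0 ≤ t := div_nonneg (by linarith) (by linarith)
  have ht1 : t ≤ 1 := by rw [ht, div_le_one hden]; linarith
  have hK : Convex ℝ (convexHull ℝ S') := convex_convexHull ℝ S'
  have c1 : ![(0:ℝ),-1,-1] ∈ convexHull ℝ S' := subset_convexHull ℝ S' (by simp [S'])
  have c2 : ![(0:ℝ),-1,1] ∈ convexHull ℝ S' := subset_convexHull ℝ S' (by simp [S'])
  have c3 : ![(0:ℝ),1,-1] ∈ convexHull ℝ S' := subset_convexHull ℝ S' (by simp [S'])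
  have c4 : ![(0:ℝ),1,1] ∈ convexHull ℝ S' := subset_convexHull ℝ S' (by simp [S'])
  have c5 : ![(1:ℝ),-1,-1] ∈ convexHull ℝ S' := subset_convexHull ℝ S' (by simp [S'])
  have c6 : ![(1:ℝ),-1,0] ∈ convexHull ℝ S' := subset_convexHull ℝ S' (by simp [S'])
  have c7 : ![(1:ℝ),0,-1] ∈ convexHull ℝ S' := subset_convexHull ℝ S' (by simp [S'])
  have c8 : ![(1:ℝ),0,0] ∈ convexHull ℝ S' := subset_convexHull ℝ S' (by simp [S'])
  have hmem : (1-x) • ((1-s) • ((1-t) • ![(0:ℝ),-1,-1] + t • ![(0:ℝ),-1,1])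
      + s • ((1-t) • ![(0:ℝ),1,-1] + t • ![(0:ℝ),1,1]))
      + x • ((1-s) • ((1-t) • ![(1:ℝ),-1,-1] + t • ![(1:ℝ),-1,0])
      + s • ((1-t) • ![(1:ℝ),0,-1] + t • ![(1:ℝ),0,0])) ∈ convexHull ℝ S' := by
    refine hK (hK (hK c1 c2 (by linarith) ht0 (by ring))
      (hK c3 c4 (by linarith) ht0 (by ring)) (by linarith) hs0 (by ring))
      (hK (hK c5 c6 (by linarith) ht0 (by ring))
      (hK c7 c8 (by linarith) ht0 (by ring)) (by linarith) hs0 (by ring))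
      (by linarith) hx0 (by ring)
  have heq : m = (1-x) • ((1-s) • ((1-t) • ![(0:ℝ),-1,-1] + t • ![(0:ℝ),-1,1])
      + s • ((1-t) • ![(0:ℝ),1,-1] + t • ![(0:ℝ),1,1]))
      + x • ((1-s) • ((1-t) • ![(1:ℝ),-1,-1] + t • ![(1:ℝ),-1,0])
      + s • ((1-t) • ![(1:ℝ),0,-1] + t • ![(1:ℝ),0,0])) := by
    have hsy : m 1 = s * (2 - x) - 1 := by rw [hs, div_mul_cancel₀ _ hden.ne']; ring
    have htz : m 2 = t * (2 - x) - 1 := by rw [ht, div_mul_cancel₀ _ hden.ne']; ring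
    funext i
    fin_cases i
    · show x = _
      simp
    · show m 1 = _
      rw [hsy]; simp; ring
    · show m 2 = _
      rw [htz]; simp; ring
  rw [heq]; exact hmem

lemma prism_neg (m : Fin 3 → ℝ) (hx0 : -1 ≤ m 0) (hx1 : m 0 ≤ 0)
    (hy0 : -1 - m 0 ≤ m 1) (hy1 : m 1 ≤ 1) (hz0 : -1 - m 0 ≤ m 2) (hz1 : m 2 ≤ 1) :
    m ∈ convexHull ℝ S' := by
  set x := m 0
  have hden : (0:ℝ) < 2 + x := by linarith
  set s := (m 1 + 1 + x) / (2 + x) with hs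
  set t := (m 2 + 1 + x) / (2 + x) with ht
  have hs0 : 0 ≤ s := div_nonneg (by linarith) (by linarith)
  have hs1 : s ≤ 1 := by rw [hs, div_le_one hden]; linarith
  have ht0 : 0 ≤ t := div_nonneg (by linarith) (by linarith)
  have ht1 : t ≤ 1 := by rw [ht, div_le_one hden]; linarith
  have hK : Convex ℝ (convexHull ℝ S') := convex_convexHull ℝ S'
  have c1 : ![(0:ℝ),-1,-1] ∈ convexHull ℝ S' := subset_convexHull ℝ S' (by simp [S'])
  have c2 : ![(0:ℝ),-1,1] ∈ convexHull ℝ S' := subset_convexHull ℝ S' (by simp [S'])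
  have c3 : ![(0:ℝ),1,-1] ∈ convexHull ℝ S' := subset_convexHull ℝ S' (by simp [S'])
  have c4 : ![(0:ℝ),1,1] ∈ convexHull ℝ S' := subset_convexHull ℝ S' (by simp [S'])
  have c5 : ![(-1:ℝ),0,0] ∈ convexHull ℝ S' := subset_convexHull ℝ S' (by simp [S'])
  have c6 : ![(-1:ℝ),0,1] ∈ convexHull ℝ S' := subset_convexHull ℝ S' (by simp [S'])
  have c7 : ![(-1:ℝ),1,0] ∈ convexHull ℝ S' := subset_convexHull ℝ S' (by simp [S'])
  have c8 : ![(-1:ℝ),1,1] ∈ convexHull ℝ S' := subset_convexHull ℝ S' (by simp [S'])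
  have hmem : (1+x) • ((1-s) • ((1-t) • ![(0:ℝ),-1,-1] + t • ![(0:ℝ),-1,1])
      + s • ((1-t) • ![(0:ℝ),1,-1] + t • ![(0:ℝ),1,1]))
      + (-x) • ((1-s) • ((1-t) • ![(-1:ℝ),0,0] + t • ![(-1:ℝ),0,1])
      + s • ((1-t) • ![(-1:ℝ),1,0] + t • ![(-1:ℝ),1,1])) ∈ convexHull ℝ S' := by
    refine hK (hK (hK c1 c2 (by linarith) ht0 (by ring))
      (hK c3 c4 (by linarith) ht0 (by ring)) (by linarith) hs0 (by ring))
      (hK (hK c5 c6 (by linarith) ht0 (by ring))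
      (hK c7 c8 (by linarith) ht0 (by ring)) (by linarith) (by linarith) (by ring))
      (by linarith) (by linarith) (by ring)
  have heq : m = (1+x) • ((1-s) • ((1-t) • ![(0:ℝ),-1,-1] + t • ![(0:ℝ),-1,1])
      + s • ((1-t) • ![(0:ℝ),1,-1] + t • ![(0:ℝ),1,1]))
      + (-x) • ((1-s) • ((1-t) • ![(-1:ℝ),0,0] + t • ![(-1:ℝ),0,1])
      + s • ((1-t) • ![(-1:ℝ),1,0] + t • ![(-1:ℝ),1,1])) := by
    have hsy : m 1 = s * (2 + x) - 1 - x := by rw [hs, div_mul_cancel₀ _ hden.ne']; ring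
    have htz : m 2 = t * (2 + x) - 1 - x := by rw [ht, div_mul_cancel₀ _ hden.ne']; ring
    funext i
    fin_cases i
    · show x = _
      simp; ring
    · show m 1 = _
      rw [hsy]; simp; ring
    · show m 2 = _
      rw [htz]; simp; ring
  rw [heq]; exact hmem

lemma Pdual_eq_hull : Pdual = convexHull ℝ S' := by
  apply Set.Subset.antisymm
  · intro m hm
    rw [mem_Pdual_iff] at hm
    obtain ⟨a1,a2,a3,a4,a5,a6,a7,a8,a9,a10⟩ := hm
    rcases le_total 0 (m 0) with hx | hx
    · exact prism_pos m hx a2 a3 (by linarith) a5 (by linarith)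
    · exact prism_neg m a1 hx (by linarith) a4 (by linarith) a6
  · refine convexHull_min ?_ ?_
    · intro v hv
      simp only [S', Set.mem_insert_iff, Set.mem_singleton_iff] at hv
      rcases hv with h|h|h|h|h|h|h|h|h|h|h|h <;> subst h <;>
        · rw [mem_Pdual_iff]
          norm_num [Matrix.cons_val_two]
    · intro p hp q hq a b ha hb hab
      intro n hn
      have h1 := hp n hn
      have h2 := hq n hn
      simp only [Pi.add_apply, Pi.smul_apply, smul_eq_mul]
      have : ∑ i, (a * p i + b * q i) * n i
          = a * (∑ i, p i * n i) + b * (∑ i, q i * n i) := by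
        simp only [Fin.sum_univ_three]; ring
      rw [this]
      nlinarith

/-- The twelve lattice vertices of the dual polytope. -/
def SZ : Finset (Fin 3 → ℤ) :=
  {![0,1,1], ![0,1,-1], ![0,-1,1], ![0,-1,-1],
   ![1,0,0], ![1,0,-1], ![1,-1,0], ![1,-1,-1],
   ![-1,0,0], ![-1,0,1], ![-1,1,0], ![-1,1,1]}

lemma SZ_image : (fun z : Fin 3 → ℤ => fun i => (z i : ℝ)) '' ↑SZ = S' := by
  have hc : ∀ a b c : ℤ, (fun i => ((![a,b,c] : Fin 3 → ℤ) i : ℝ)) = ![(a:ℝ),(b:ℝ),(c:ℝ)] := by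
    intro a b c; funext i; fin_cases i <;> simp
  rw [SZ, S']
  simp only [Finset.coe_insert, Finset.coe_singleton, Set.image_insert_eq, Set.image_singleton,
    hc, Int.cast_zero, Int.cast_one, Int.cast_neg]

lemma S'_finite : S'.Finite := by
  rw [S']
  exact Set.Finite.insert _ (Set.Finite.insert _ (Set.Finite.insert _ (Set.Finite.insert _
    (Set.Finite.insert _ (Set.Finite.insert _ (Set.Finite.insert _ (Set.Finite.insert _
    (Set.Finite.insert _ (Set.Finite.insert _ (Set.Finite.insert _
    (Set.finite_singleton _)))))))))))

lemma Pdual_measurable : MeasurableSet Pdual := by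
  rw [Pdual_eq_hull]
  exact (S'_finite.isCompact_convexHull ℝ).isClosed.measurableSet

lemma Pdual_neg_mem {m : Fin 3 → ℝ} (hm : m ∈ Pdual) : -m ∈ Pdual := by
  rw [mem_Pdual_iff] at hm ⊢
  simp only [Pi.neg_apply]
  obtain ⟨a1,a2,a3,a4,a5,a6,a7,a8,a9,a10⟩ := hm
  refine ⟨by linarith, by linarith, by linarith, by linarith, by linarith,
    by linarith, by linarith, by linarith, by linarith, by linarith⟩

lemma Pdual_barycentre : (∫ x in Pdual, x ∂volume) = (0 : Fin 3 → ℝ) := by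
  have hmeas := Pdual_measurable
  have key : ∫ x in Pdual, x ∂volume = ∫ x, Pdual.indicator (fun y => y) x ∂volume :=
    (integral_indicator hmeas).symm
  have hind : ∀ x : Fin 3 → ℝ, Pdual.indicator (fun y => y) (-x)
      = - Pdual.indicator (fun y => y) x := by
    intro x
    by_cases hx : x ∈ Pdual
    · have h2 : -x ∈ Pdual := Pdual_neg_mem hx
      simp [Set.indicator_of_mem hx, Set.indicator_of_mem h2]
    · have h2 : -x ∉ Pdual := by
        intro h
        exact hx (by simpa using Pdual_neg_mem h)
      simp [Set.indicator_of_notMem hx, Set.indicator_of_notMem h2]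
  have h3 : ∫ x, Pdual.indicator (fun y => y) x ∂volume
      = - ∫ x, Pdual.indicator (fun y => y) x ∂volume := by
    conv_lhs => rw [← integral_neg_eq_self (Pdual.indicator (fun y => y)) volume]
    simp_rw [hind]
    rw [integral_neg]
  have h4 : ∫ x, Pdual.indicator (fun y => y) x ∂volume = 0 := by
    have := h3
    have h5 : (2 : ℝ) • (∫ x, Pdual.indicator (fun y => y) x ∂volume) = 0 := by
      rw [two_smul]
      nth_rewrite 2 [h3]
      simp
    simpa using (smul_eq_zero.mp h5).resolve_left (by norm_num)
  rw [key, h4]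

lemma integral_slice : ∫ u in Set.Icc (-1:ℝ) 1, (2 - |u|)^2 = 28 / 6 := by
  have hcont : Continuous (fun u : ℝ => (2 - |u|)^2) :=
    (continuous_const.sub continuous_abs).pow 2
  rw [MeasureTheory.integral_Icc_eq_integral_Ioc,
    ← intervalIntegral.integral_of_le (by norm_num : (-1:ℝ) ≤ 1)]
  rw [← intervalIntegral.integral_add_adjacent_intervals (a := (-1:ℝ)) (b := 0) (c := 1)
    (hcont.intervalIntegrable _ _) (hcont.intervalIntegrable _ _)]
  have h1 : ∫ u in (-1:ℝ)..0, (2 - |u|)^2 = ∫ u in (-1:ℝ)..0, (4 + 4*u + u^2) := by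
    apply intervalIntegral.integral_congr
    intro u hu
    rw [Set.uIcc_of_le (by norm_num : (-1:ℝ) ≤ 0)] at hu
    show (2 - |u|)^2 = 4 + 4*u + u^2
    rw [abs_of_nonpos hu.2]; ring
  have h2 : ∫ u in (0:ℝ)..1, (2 - |u|)^2 = ∫ u in (0:ℝ)..1, (4 - 4*u + u^2) := by
    apply intervalIntegral.integral_congr
    intro u hu
    rw [Set.uIcc_of_le (by norm_num : (0:ℝ) ≤ 1)] at hu
    show (2 - |u|)^2 = 4 - 4*u + u^2
    rw [abs_of_nonneg hu.1]; ring
  have e1 : ∀ a b : ℝ, ∫ u in a..b, (4 + 4*u + u^2)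
      = (4*b + 2*b^2 + b^3/3) - (4*a + 2*a^2 + a^3/3) := by
    intro a b
    have hd : ∀ u : ℝ, HasDerivAt (fun y : ℝ => 4*y + 2*y^2 + y^3/3) (4 + 4*u + u^2) u := by
      intro u
      have h := (((hasDerivAt_id u).const_mul (4:ℝ)).add
        ((hasDerivAt_pow 2 u).const_mul (2:ℝ))).add ((hasDerivAt_pow 3 u).div_const 3)
      refine HasDerivAt.congr_deriv h ?_
      push_cast
      ring
    exact intervalIntegral.integral_eq_sub_of_hasDerivAt (fun u _ => hd u)
      ((by continuity : Continuous (fun u : ℝ => 4 + 4*u + u^2)).intervalIntegrable a b)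
  have e2 : ∀ a b : ℝ, ∫ u in a..b, (4 - 4*u + u^2)
      = (4*b - 2*b^2 + b^3/3) - (4*a - 2*a^2 + a^3/3) := by
    intro a b
    have hd : ∀ u : ℝ, HasDerivAt (fun y : ℝ => 4*y - 2*y^2 + y^3/3) (4 - 4*u + u^2) u := by
      intro u
      have h := (((hasDerivAt_id u).const_mul (4:ℝ)).sub
        ((hasDerivAt_pow 2 u).const_mul (2:ℝ))).add ((hasDerivAt_pow 3 u).div_const 3)
      refine HasDerivAt.congr_deriv h ?_
      push_cast
      ring
    exact intervalIntegral.integral_eq_sub_of_hasDerivAt (fun u _ => hd u)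
      ((by continuity : Continuous (fun u : ℝ => 4 - 4*u + u^2)).intervalIntegrable a b)
  rw [h1, h2, e1, e2]
  norm_num

lemma Pdual_volume : volume Pdual = ENNReal.ofReal (28 / 6) := by
  have hmeas := Pdual_measurable
  set e := MeasurableEquiv.piFinSuccAbove (fun _ : Fin 3 => ℝ) 0 with he
  have hp : MeasurePreserving e.symm volume volume :=
    (volume_preserving_piFinSuccAbove (fun _ : Fin 3 => ℝ) 0).symm
  set T : Set (ℝ × (Fin 2 → ℝ)) := e.symm ⁻¹' Pdual with hT
  have hTmeas : MeasurableSet T := e.symm.measurable hmeas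
  have hvol : volume Pdual = volume T := (hp.measure_preimage hmeas.nullMeasurableSet).symm
  rw [hvol]
  have hmemT : ∀ u : ℝ, ∀ v : Fin 2 → ℝ, ((u, v) ∈ T ↔
      (-1 ≤ u ∧ u ≤ 1 ∧ -1 ≤ v 0 ∧ v 0 ≤ 1 ∧ -1 ≤ v 1 ∧ v 1 ≤ 1 ∧
       -1 ≤ u + v 0 ∧ u + v 0 ≤ 1 ∧ -1 ≤ u + v 1 ∧ u + v 1 ≤ 1)) := by
    intro u v
    have h0 : (e.symm (u, v)) 0 = u := rfl
    have h1 : (e.symm (u, v)) 1 = v 0 := rfl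
    have h2 : (e.symm (u, v)) 2 = v 1 := rfl
    rw [hT, Set.mem_preimage, mem_Pdual_iff, h0, h1, h2]
  have hslice : ∀ u ∈ Set.Icc (-1:ℝ) 1, Prod.mk u ⁻¹' T
      = Set.pi Set.univ (fun _ : Fin 2 => Set.Icc (max (-1) (-1-u)) (min 1 (1-u))) := by
    intro u hu
    ext v
    rw [Set.mem_preimage]
    rw [hmemT u v]
    simp only [Set.mem_pi, Set.mem_univ, forall_true_left, Set.mem_Icc, Fin.forall_fin_two,
      max_le_iff, le_min_iff]
    constructor
    · rintro ⟨b1,b2,b3,b4,b5,b6,b7,b8,b9,b10⟩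
      refine ⟨⟨⟨b3, by linarith⟩, b4, by linarith⟩, ⟨b5, by linarith⟩, b6, by linarith⟩
    · rintro ⟨⟨⟨c1,c2⟩,c3,c4⟩,⟨c5,c6⟩,c7,c8⟩
      exact ⟨hu.1, hu.2, c1, c3, c5, c7, by linarith, by linarith, by linarith, by linarith⟩
  have hslice0 : ∀ u : ℝ, u ∉ Set.Icc (-1:ℝ) 1 → Prod.mk u ⁻¹' T = ∅ := by
    intro u hu
    ext v
    rw [Set.mem_preimage, hmemT u v]
    simp only [Set.mem_Icc, not_and_or, not_le] at hu
    simp only [Set.mem_empty_iff_false, iff_false]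
    rintro ⟨b1,b2,_⟩
    rcases hu with h | h <;> linarith
  have hvolslice : ∀ u ∈ Set.Icc (-1:ℝ) 1,
      volume (Prod.mk u ⁻¹' T) = ENNReal.ofReal ((2 - |u|)^2) := by
    intro u hu
    rw [hslice u hu, volume_pi_pi]
    have hlen : min 1 (1-u) - max (-1) (-1-u) = 2 - |u| := by
      rcases le_total 0 u with h | h
      · rw [abs_of_nonneg h, min_eq_right (by linarith), max_eq_left (by linarith)]
        ring
      · rw [abs_of_nonpos h, min_eq_left (by linarith), max_eq_right (by linarith)]
        ring
    rw [Real.volume_Icc, hlen]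
    rw [Finset.prod_const, Finset.card_univ, Fintype.card_fin]
    have habs : |u| ≤ 1 := abs_le.mpr ⟨hu.1, hu.2⟩
    rw [← ENNReal.ofReal_pow (by linarith)]
  have hTvol : volume T = ∫⁻ u, (Set.Icc (-1:ℝ) 1).indicator
      (fun u => ENNReal.ofReal ((2 - |u|)^2)) u := by
    rw [Measure.volume_eq_prod, Measure.prod_apply hTmeas]
    apply lintegral_congr
    intro u
    by_cases hu : u ∈ Set.Icc (-1:ℝ) 1
    · rw [Set.indicator_of_mem hu, hvolslice u hu]
    · rw [Set.indicator_of_notMem hu, hslice0 u hu]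
      simp
  rw [hTvol, lintegral_indicator measurableSet_Icc]
  have hInt : IntegrableOn (fun u : ℝ => (2 - |u|)^2) (Set.Icc (-1:ℝ) 1) volume :=
    ((continuous_const.sub continuous_abs).pow 2).integrableOn_Icc
  rw [← ofReal_integral_eq_lintegral_ofReal hInt (Filter.Eventually.of_forall (fun u => by positivity))]
  rw [integral_slice]

theorem stmt7 :
    -- `P°` is a lattice polytope, i.e. `P` is reflexive
    (∃ S : Finset (Fin 3 → ℤ),
      Pdual = convexHull ℝ ((fun z : Fin 3 → ℤ => fun i => (z i : ℝ)) '' ↑S)) ∧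
    -- the barycentre of `P°` is the origin
    (∫ x in Pdual, x ∂volume) = 0 ∧
    -- `P°` has Euclidean volume `28/6`, i.e. normalised volume `28`
    volume Pdual = ENNReal.ofReal (28 / 6) := by
  refine ⟨⟨SZ, ?_⟩, Pdual_barycentre, Pdual_volume⟩
  rw [SZ_image, Pdual_eq_hull]
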